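/- Let G be the degree-5 root gadget and let C be the class of tree-child rooted phylogenetic networks. Then G has a funneled C_A-orientation whose root ρ subdivides the edge {u,u'}. -/

import Mathlib

/-!
Common definitions: rooted (pseudo/phylogenetic) networks represented as arc
relations `D : V → V → Prop` on a vertex type `V`, with in/out-degrees measured
by `Set.ncard`, together with the orientation notions (Variant A, Variant B,
orientations of connector networks) from the paper.
-/

section Prelude

universe u
variable {V : Type u}

/-- In-degree of `v` in the digraph with arc relation `D`. -/
noncomputable def inDeg (D : V → V → Prop) (v : V) : ℕ := Set.ncard {u | D u v}

/-- Out-degree of `v` in the digraph with arc relation `D`. -/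
noncomputable def outDeg (D : V → V → Prop) (v : V) : ℕ := Set.ncard {u | D v u}

/-- A digraph is acyclic if it has no directed cycle. -/
def Acyclic (D : V → V → Prop) : Prop := ∀ v, ¬ Relation.TransGen D v v

/-- A tree vertex: in-degree 1 and out-degree at least 1. -/
def IsTreeVertex (D : V → V → Prop) (v : V) : Prop := inDeg D v = 1 ∧ 1 ≤ outDeg D v

/-- A leaf (sink) of a digraph. -/
def IsLeafVertex (D : V → V → Prop) (v : V) : Prop := outDeg D v = 0

/-- Tree-child: every non-leaf vertex has a child that is a tree vertex or a leaf. -/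
def TreeChild (D : V → V → Prop) : Prop :=
  ∀ v, ¬ IsLeafVertex D v → ∃ u, D v u ∧ (IsTreeVertex D u ∨ IsLeafVertex D u)

/-- Funneled: every reticulation (in-degree at least 2) has out-degree 1. -/
def Funneled (D : V → V → Prop) : Prop := ∀ v, 2 ≤ inDeg D v → outDeg D v = 1

/-- An arc `(a,b)` is a shortcut if there is another directed path from `a` to `b`. -/
def IsShortcut (D : V → V → Prop) (a b : V) : Prop :=
  D a b ∧ ∃ c, D a c ∧ Relation.TransGen D c b

/-- Normal: tree-child and without shortcuts. -/
def NormalNet (D : V → V → Prop) : Prop := TreeChild D ∧ ∀ a b, ¬ IsShortcut D a b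

/-- `D` is a rooted pseudo network with root `ρ` whose set of leaves is `X`
(leaves are labelled by themselves). -/
def IsRootedPseudoNetwork (D : V → V → Prop) (ρ : V) (X : Set V) : Prop :=
  Acyclic D ∧ (∀ v, ¬ D v v) ∧
  inDeg D ρ = 0 ∧ 1 ≤ outDeg D ρ ∧
  (∀ v, inDeg D v = 0 → v = ρ) ∧
  (∀ v, outDeg D v = 0 → inDeg D v = 1) ∧
  {v | outDeg D v = 0} = X ∧
  (∀ v, v ≠ ρ → outDeg D v ≠ 0 → 1 ≤ inDeg D v ∧ 1 ≤ outDeg D v)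

/-- `D` is a rooted phylogenetic network with root `ρ` and leaf set `X`:
additionally every internal vertex has in-degree 1 and out-degree ≥ 2, or
in-degree ≥ 2 and out-degree ≥ 1. -/
def IsRootedPhyloNetwork (D : V → V → Prop) (ρ : V) (X : Set V) : Prop :=
  Acyclic D ∧ (∀ v, ¬ D v v) ∧
  inDeg D ρ = 0 ∧ 1 ≤ outDeg D ρ ∧
  (∀ v, inDeg D v = 0 → v = ρ) ∧
  (∀ v, outDeg D v = 0 → inDeg D v = 1) ∧
  {v | outDeg D v = 0} = X ∧
  (∀ v, v ≠ ρ → outDeg D v ≠ 0 →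
    (inDeg D v = 1 ∧ 2 ≤ outDeg D v) ∨ (2 ≤ inDeg D v ∧ 1 ≤ outDeg D v))

/-- `{u,w} = {a,b}` as unordered pairs. -/
def SamePair (u w a b : V) : Prop := (u = a ∧ w = b) ∨ (u = b ∧ w = a)

/-- A Variant-A orientation of the undirected graph `adj` obtained by
subdividing the edge `{a,b}` with a new root vertex `none` and directing all
edges; `D` is the resulting arc relation on `Option V` (the root is `none`). -/
def VariantA (adj : V → V → Prop) (a b : V) (D : Option V → Option V → Prop) : Prop :=
  adj a b ∧
  D none (some a) ∧ D none (some b) ∧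
  (∀ o, ¬ D o none) ∧
  (∀ u, D none (some u) → u = a ∨ u = b) ∧
  (∀ u w : V, D (some u) (some w) → adj u w ∧ ¬ SamePair u w a b) ∧
  (∀ u w : V, adj u w → ¬ SamePair u w a b → (D (some u) (some w) ↔ ¬ D (some w) (some u)))

/-- `D` assigns to each edge of `adj` exactly one direction (used for
Variant-B orientations and for orientations of connector networks). -/
def IsOrientation (adj D : V → V → Prop) : Prop :=
  (∀ a b, D a b → adj a b) ∧ (∀ a b, adj a b → (D a b ↔ ¬ D b a))

/-- An orientation of a connector network with labelled leaves `L` and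
connector leaves `Uc` that is acyclic, in which every labelled leaf has
out-degree 0 and every vertex not in `L ∪ Uc` has in-degree ≥ 1 and
out-degree ≥ 1 (the standing hypotheses for the compatibility notions). -/
def GoodOrientation (adj D : V → V → Prop) (L Uc : Set V) : Prop :=
  IsOrientation adj D ∧ Acyclic D ∧ (∀ v ∈ L, outDeg D v = 0) ∧
  (∀ v, v ∉ L ∪ Uc → 1 ≤ inDeg D v ∧ 1 ≤ outDeg D v)

/-- F-compatible: every vertex of in-degree at least 2 has out-degree 1. -/
def FCompatible (D : V → V → Prop) : Prop := ∀ v, 2 ≤ inDeg D v → outDeg D v = 1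

/-- TC-compatible orientation of a connector network. -/
def TCCompatible (D : V → V → Prop) (L Uc : Set V) : Prop :=
  ∀ v, v ∉ L ∪ Uc → ∃ u, D v u ∧ (u ∈ L ∪ Uc ∨ (inDeg D u = 1 ∧ 1 ≤ outDeg D u))

/-- Strongly TC-compatible orientation of a connector network. -/
def StrongTCCompatible (D : V → V → Prop) (L Uc : Set V) : Prop :=
  ∀ v, v ∉ L ∪ Uc → ∃ u, D v u ∧ (u ∈ L ∨ (inDeg D u = 1 ∧ 1 ≤ outDeg D u))

end Prelude

namespace PaperFormalization

/-- Vertices of the degree-5 root gadget: connector leaf `r`, internal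
vertices `s,u,u',v,v'`, two pendant labelled leaves `ul k` at `u` and
`ul' k` at `u'`, and three pendant labelled leaves `vl k` at `v` and
`vl' k` at `v'`. -/
inductive RG5 : Type
  | r | s | u | u' | v | v'
  | ul (k : Fin 2) | ul' (k : Fin 2) | vl (k : Fin 3) | vl' (k : Fin 3)

/-- The edges of the degree-5 root gadget (one fixed orientation of each edge). -/
def rg5Base : RG5 → RG5 → Prop
  | .r, .s => True
  | .s, .u => True
  | .s, .u' => True
  | .s, .v => True
  | .s, .v' => True
  | .u, .u' => True
  | .u, .v => True
  | .u', .v' => True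
  | .u, .ul _ => True
  | .u', .ul' _ => True
  | .v, .vl _ => True
  | .v', .vl' _ => True
  | _, _ => False

/-- Adjacency relation of the degree-5 root gadget. -/
def rg5Adj (a b : RG5) : Prop := rg5Base a b ∨ rg5Base b a

/-- Leaf set of the partner network of the degree-5 root gadget (`r` regarded
as a labelled leaf). -/
def rg5Leaves : Set RG5 :=
  {w | match w with
    | .r => True
    | .ul _ => True
    | .ul' _ => True
    | .vl _ => True
    | .vl' _ => True
    | _ => False}

end PaperFormalization

namespace PaperFormalization

deriving instance DecidableEq for RG5
deriving instance Fintype for RG5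

/-- Boolean arc relation of the chosen orientation. -/
def dfun : Option RG5 → Option RG5 → Bool
  | none, some .u => true
  | none, some .u' => true
  | some .u, some .s => true
  | some .u, some .v => true
  | some .u, some (.ul _) => true
  | some .u', some .s => true
  | some .u', some .v' => true
  | some .u', some (.ul' _) => true
  | some .v, some .s => true
  | some .v, some (.vl _) => true
  | some .v', some .s => true
  | some .v', some (.vl' _) => true
  | some .s, some .r => true
  | _, _ => false

/-- The chosen orientation as a Prop-valued relation. -/
def Drel (a b : Option RG5) : Prop := dfun a b = true

instance : ∀ a b, Decidable (Drel a b) := fun a b =>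
  inferInstanceAs (Decidable (dfun a b = true))

instance : ∀ a b, Decidable (rg5Base a b) := fun a b => by
  cases a <;> cases b <;> simp only [rg5Base] <;> infer_instance

instance : ∀ a b, Decidable (rg5Adj a b) := fun a b =>
  inferInstanceAs (Decidable (_ ∨ _))

instance : DecidablePred (· ∈ rg5Leaves) := fun w => by
  cases w <;> simp only [rg5Leaves, Set.mem_setOf_eq] <;> infer_instance

instance : ∀ a b c d : RG5, Decidable (SamePair a b c d) := fun a b c d => by
  unfold SamePair; infer_instance

lemma inDeg_Drel (v : Option RG5) :
    inDeg Drel v = (Finset.univ.filter fun x => dfun x v = true).card := by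
  rw [inDeg, Set.ncard_eq_toFinset_card']
  simp [Drel, Set.toFinset_setOf]
  congr 1; ext x; convert Set.mem_toFinset (s := {u | dfun u v = true})
  · exact Set.toFinset_congr rfl
  · simp

lemma outDeg_Drel (v : Option RG5) :
    outDeg Drel v = (Finset.univ.filter fun x => dfun v x = true).card := by
  rw [outDeg, Set.ncard_eq_toFinset_card']
  simp [Drel, Set.toFinset_setOf]
  congr 1; ext x; convert Set.mem_toFinset (s := {u | dfun v u = true})
  · exact Set.toFinset_congr rfl
  · simp

/-- Rank function witnessing acyclicity. -/
def rnk : Option RG5 → ℕ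
  | none => 0
  | some .u => 1
  | some .u' => 1
  | some .v => 2
  | some .v' => 2
  | some .s => 3
  | _ => 4

lemma rnk_lt : ∀ a b, Drel a b → rnk a < rnk b := by decide

lemma acyc_Drel : Acyclic Drel := by
  intro v h
  have key : ∀ a b, Relation.TransGen Drel a b → rnk a < rnk b := by
    intro a b h
    induction h with
    | single h => exact rnk_lt _ _ h
    | tail _ h ih => exact ih.trans (rnk_lt _ _ h)
  exact absurd (key v v h) (lt_irrefl _)

/-- Lemma `root_gadget_deg5`(i): the degree-5 root gadget
has a funneled `C_A`-orientation, for `C` the class of tree-child rooted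
phylogenetic networks, whose root `ρ` subdivides the edge `{u,u'}`. -/
theorem deg5_root_gadget_funneled_treechild_CA_orientation_at_uu' :
    ∃ D : Option RG5 → Option RG5 → Prop,
      VariantA rg5Adj RG5.u RG5.u' D ∧
      IsRootedPhyloNetwork D none (Option.some '' rg5Leaves) ∧
      TreeChild D ∧ Funneled D := by
  refine ⟨Drel, ⟨Or.inl trivial, ?_, ?_, ?_, ?_, ?_, ?_⟩, ⟨acyc_Drel, ?_, ?_, ?_, ?_, ?_, ?_, ?_⟩, ?_, ?_⟩
  · decide
  · decide
  · decide
  · decide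
  · decide
  · decide
  · decide
  · simp only [inDeg_Drel]; decide
  · simp only [outDeg_Drel]; decide
  · simp only [inDeg_Drel]; decide
  · simp only [inDeg_Drel, outDeg_Drel]; decide
  · ext x
    simp only [Set.mem_setOf_eq, outDeg_Drel, Set.mem_image]
    revert x; decide
  · simp only [inDeg_Drel, outDeg_Drel]; decide
  · unfold TreeChild IsLeafVertex IsTreeVertex
    simp only [inDeg_Drel, outDeg_Drel]; decide
  · unfold Funneled
    simp only [inDeg_Drel, outDeg_Drel]; decide

end PaperFormalization
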